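/- Let d ≥ 3 and k ≥ 2 be integers and let d_1, …, d_k be natural numbers with Σ_{i=1}^k d_i ≤ d and d_k ≤ d − 1. Then Σ_{i=1}^k d_i·G(i)·(2k − 2i + 1) < d·G(k), where G(m) = (d^m − 1)/(d − 1). -/

import Mathlib

/-- Number of nodes in the first `m` levels of a complete `d`-ary tree. -/
noncomputable def G (d m : ℕ) : ℝ := ((d : ℝ) ^ m - 1) / ((d : ℝ) - 1)

lemma aux_two_mul_add_one (j : ℕ) : 2 * j + 1 ≤ 3 ^ j := by
  induction j with
  | zero => norm_num
  | succ n ih =>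
    have : 3 ^ n ≥ 1 := Nat.one_le_pow _ _ (by norm_num)
    calc 2 * (n + 1) + 1 = (2 * n + 1) + 2 := by ring
      _ ≤ 3 ^ n + 2 := by omega
      _ ≤ 3 ^ (n + 1) := by rw [pow_succ]; omega

lemma G_key (d : ℕ) (hd : 3 ≤ d) (i j : ℕ) (hi : 1 ≤ i) :
    G d i * (2 * (j : ℝ) + 1) ≤ G d (i + j) ∧
    (1 ≤ j → G d i * (2 * (j : ℝ) + 1) < G d (i + j)) := by
  have hdR : (3 : ℝ) ≤ (d : ℝ) := by exact_mod_cast hd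
  have hden : (0 : ℝ) < (d : ℝ) - 1 := by linarith
  have h3 : (2 * (j : ℝ) + 1) ≤ (d : ℝ) ^ j := by
    have : (2 * j + 1 : ℕ) ≤ d ^ j :=
      le_trans (aux_two_mul_add_one j) (Nat.pow_le_pow_left hd j)
    exact_mod_cast this
  have hdi : (1 : ℝ) ≤ (d : ℝ) ^ i := one_le_pow₀ (by linarith)
  have hdj : (1 : ℝ) ≤ (d : ℝ) ^ j := one_le_pow₀ (by linarith)
  have hstep : ((d : ℝ) ^ i - 1) * (2 * (j : ℝ) + 1)
      ≤ (d : ℝ) ^ (i + j) - (d : ℝ) ^ j := by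
    calc ((d : ℝ) ^ i - 1) * (2 * (j : ℝ) + 1)
        ≤ ((d : ℝ) ^ i - 1) * (d : ℝ) ^ j :=
          mul_le_mul_of_nonneg_left h3 (by linarith)
      _ = (d : ℝ) ^ (i + j) - (d : ℝ) ^ j := by rw [pow_add]; ring
  constructor
  · rw [G, G, div_mul_eq_mul_div, div_le_div_iff_of_pos_right hden]
    linarith
  · intro hj
    have hdj3 : (3 : ℝ) ≤ (d : ℝ) ^ j := by
      have : (3 : ℕ) ≤ d ^ j := by
        calc (3:ℕ) = 3 ^ 1 := rfl
          _ ≤ 3 ^ j := Nat.pow_le_pow_right (by norm_num) hj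
          _ ≤ d ^ j := Nat.pow_le_pow_left hd j
      exact_mod_cast this
    rw [G, G, div_mul_eq_mul_div, div_lt_div_iff_of_pos_right hden]
    linarith

theorem stmt_9 (d k : ℕ) (hd : 3 ≤ d) (hk : 2 ≤ k)
    (dv : ℕ → ℕ) (hsum : ∑ i ∈ Finset.Icc 1 k, dv i ≤ d) (hdk : dv k ≤ d - 1) :
    ∑ i ∈ Finset.Icc 1 k, (dv i : ℝ) * G d i * (2 * (k : ℝ) - 2 * (i : ℝ) + 1)
      < (d : ℝ) * G d k := by
  have hdR : (3 : ℝ) ≤ (d : ℝ) := by exact_mod_cast hd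
  have hden : (0 : ℝ) < (d : ℝ) - 1 := by linarith
  have hGk : 0 < G d k := by
    have : (1 : ℝ) < (d : ℝ) ^ k := one_lt_pow₀ (by linarith) (by omega)
    exact div_pos (by linarith) hden
  -- pointwise bounds
  have hrw : ∀ i ∈ Finset.Icc 1 k,
      (2 * (k : ℝ) - 2 * (i : ℝ) + 1) = 2 * ((k - i : ℕ) : ℝ) + 1 := by
    intro i hi
    rw [Finset.mem_Icc] at hi
    rw [Nat.cast_sub hi.2]
    ring
  have hle : ∀ i ∈ Finset.Icc 1 k,
      (dv i : ℝ) * G d i * (2 * (k : ℝ) - 2 * (i : ℝ) + 1) ≤ (dv i : ℝ) * G d k := by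
    intro i hi
    have hi' := Finset.mem_Icc.mp hi
    have := (G_key d hd i (k - i) hi'.1).1
    rw [Nat.add_sub_cancel' hi'.2] at this
    rw [hrw i hi, mul_assoc]
    exact mul_le_mul_of_nonneg_left this (by positivity)
  have hsumR : (∑ i ∈ Finset.Icc 1 k, (dv i : ℝ)) ≤ (d : ℝ) := by
    exact_mod_cast hsum
  by_cases hc : ∃ i ∈ Finset.Icc 1 k, i ≠ k ∧ 0 < dv i
  · obtain ⟨i0, hi0, hne, hpos⟩ := hc
    have hi0' := Finset.mem_Icc.mp hi0
    have hlt : (dv i0 : ℝ) * G d i0 * (2 * (k : ℝ) - 2 * (i0 : ℝ) + 1)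
        < (dv i0 : ℝ) * G d k := by
      have hj : 1 ≤ k - i0 := by omega
      have := (G_key d hd i0 (k - i0) hi0'.1).2 hj
      rw [Nat.add_sub_cancel' hi0'.2] at this
      rw [hrw i0 hi0, mul_assoc]
      exact mul_lt_mul_of_pos_left this (by exact_mod_cast hpos)
    calc ∑ i ∈ Finset.Icc 1 k, (dv i : ℝ) * G d i * (2 * (k : ℝ) - 2 * (i : ℝ) + 1)
        < ∑ i ∈ Finset.Icc 1 k, (dv i : ℝ) * G d k :=
          Finset.sum_lt_sum hle ⟨i0, hi0, hlt⟩
      _ = (∑ i ∈ Finset.Icc 1 k, (dv i : ℝ)) * G d k := by rw [Finset.sum_mul]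
      _ ≤ (d : ℝ) * G d k := mul_le_mul_of_nonneg_right hsumR hGk.le
  · push_neg at hc
    have hzero : ∀ i ∈ Finset.Icc 1 k, i ≠ k →
        (dv i : ℝ) * G d i * (2 * (k : ℝ) - 2 * (i : ℝ) + 1) = 0 := by
      intro i hi hne
      have : dv i = 0 := by have := hc i hi hne; omega
      simp [this]
    rw [Finset.sum_eq_single_of_mem k (Finset.mem_Icc.mpr ⟨by omega, le_refl k⟩) hzero]
    have h1 : (2 * (k : ℝ) - 2 * (k : ℝ) + 1) = 1 := by ring
    rw [h1, mul_one]
    have hdkR : (dv k : ℝ) ≤ (d : ℝ) - 1 := by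
      have : (dv k : ℝ) ≤ ((d - 1 : ℕ) : ℝ) := by exact_mod_cast hdk
      rwa [Nat.cast_sub (by omega), Nat.cast_one] at this
    calc (dv k : ℝ) * G d k ≤ ((d : ℝ) - 1) * G d k :=
          mul_le_mul_of_nonneg_right hdkR hGk.le
      _ < (d : ℝ) * G d k := by nlinarith
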